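/- Let C ⊆ [0,1] be the fat Cantor set with level-n interval length l_n = 1/(2^{n+1} − 1) and let F = C × C ⊆ ℝ². Then for every 0 < α < 1/2, D_*(α, F) = 0; moreover there is a dense Gδ subset 𝒢 of C₁^α(F) such that λ(f(F)) = 0 for every f ∈ 𝒢. -/

import Mathlib

open MeasureTheory
open scoped Classical NNReal ENNReal Topology

noncomputable section

/-- `l_n = 1/(2^{n+1} − 1)`, the common length of the `2^n` maximal closed
subintervals of the stage-`n` set `C_n` of the fat Cantor set construction. -/
def lCant (n : ℕ) : ℝ := 1 / (2 ^ (n + 1) - 1)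

/-- Auxiliary recursion computing the left endpoint of the level-`n` interval
indexed by a binary word (`false` = left child, `true` = right child). -/
def leftEndAux : ℕ → ℝ → List Bool → ℝ
  | _, a, [] => a
  | n, a, b :: w => leftEndAux (n + 1) (if b then a + lCant n - lCant (n + 1) else a) w

/-- The left endpoint of the interval of the fat Cantor set construction indexed by
the binary word `w`. -/
def leftEnd (w : List Bool) : ℝ := leftEndAux 0 0 w

/-- The stage-`n` set `C_n`: the union of the `2^n` closed intervals of length `l_n`. -/
def cantorStage (n : ℕ) : Set ℝ :=
  ⋃ (w : List Bool) (_ : w.length = n), Set.Icc (leftEnd w) (leftEnd w + lCant n)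

/-- The fat Cantor set `C = ⋂ₙ C_n`. -/
def fatC : Set ℝ := ⋂ n : ℕ, cantorStage n

/-- The product set `F = C × C ⊆ ℝ²` (with the Euclidean metric). -/
def fatSquare : Set (EuclideanSpace ℝ (Fin 2)) := {x | x 0 ∈ fatC ∧ x 1 ∈ fatC}

/-- `C₁^α(F)`: the set of 1-Hölder-α functions `F → ℝ`, as a subset of the bounded
continuous functions on `F` (which carry the supremum metric). -/
def HolderBall (α : ℝ) {p : ℕ} (F : Set (EuclideanSpace ℝ (Fin p))) :
    Set (BoundedContinuousFunction ↥F ℝ) :=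
  {f | ∀ x y : ↥F,
    |f x - f y| ≤ dist (x : EuclideanSpace ℝ (Fin p)) (y : EuclideanSpace ℝ (Fin p)) ^ α}

/-- `D_*^f(F) = sup {d : λ{r : dim_H (f⁻¹(r)) ≥ d} > 0}`. -/
def DstarF {p : ℕ} (F : Set (EuclideanSpace ℝ (Fin p))) (f : ↥F → ℝ) : ℝ :=
  sSup {d : ℝ | 0 < volume {r : ℝ | ENNReal.ofReal d ≤ dimH (Subtype.val '' (f ⁻¹' {r}))}}

/-- `D_*(α, F)`: the supremum over all dense Gδ subsets `G` of `C₁^α(F)` of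
`inf {D_*^f(F) : f ∈ G}`. -/
def DStar {p : ℕ} (α : ℝ) (F : Set (EuclideanSpace ℝ (Fin p))) : ℝ :=
  sSup {d : ℝ | ∃ G : Set ↥(HolderBall α F), Dense G ∧ IsGδ G ∧
    d = sInf ((fun g : ↥(HolderBall α F) =>
      DstarF F ⇑(g : BoundedContinuousFunction ↥F ℝ)) '' G)}


lemma two_pow_sub_one_pos (n : ℕ) : (0:ℝ) < 2 ^ (n+1) - 1 := by
  have h : (2:ℝ) ^ 1 ≤ 2 ^ (n+1) := pow_le_pow_right₀ (by norm_num) (by omega)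
  norm_num at h; linarith

lemma lCant_pos (n : ℕ) : 0 < lCant n := div_pos one_pos (two_pow_sub_one_pos n)

lemma lCant_le_one (n : ℕ) : lCant n ≤ 1 := by
  rw [lCant, div_le_one (two_pow_sub_one_pos n)]
  have h : (2:ℝ) ^ 1 ≤ 2 ^ (n+1) := pow_le_pow_right₀ (by norm_num) (by omega)
  norm_num at h; linarith

lemma lCant_anti {n m : ℕ} (h : n ≤ m) : lCant m ≤ lCant n := by
  apply one_div_le_one_div_of_le (two_pow_sub_one_pos n)
  have : (2:ℝ) ^ (n+1) ≤ 2 ^ (m+1) := pow_le_pow_right₀ (by norm_num) (by omega)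
  linarith

lemma lCant_zero : lCant 0 = 1 := by norm_num [lCant]

lemma lCant_le_half_pow (n : ℕ) : lCant n ≤ (1/2) ^ n := by
  rw [lCant, div_pow, one_pow, div_le_div_iff₀ (two_pow_sub_one_pos n) (by positivity)]
  have h : (2:ℝ)^(n+1) = 2 * 2^n := by ring
  have h2 : (1:ℝ) ≤ 2^n := one_le_pow₀ (by norm_num)
  nlinarith

lemma gap_lemma {k N : ℕ} (h : k < N) : lCant N ^ 2 ≤ lCant k - 2 * lCant (k+1) := by
  have hA := two_pow_sub_one_pos k
  have hB := two_pow_sub_one_pos (k+1)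
  have hC := two_pow_sub_one_pos N
  have key : lCant k - 2 * lCant (k+1) = 1 / ((2^(k+1) - 1) * (2^(k+2) - 1)) := by
    rw [lCant, lCant]
    have hB2 : (2:ℝ)^(k+1+1) = 2 * 2^(k+1) := by ring
    rw [show k+1+1 = k+2 from rfl] at hB2
    field_simp
    nlinarith [hB2]
  rw [key, lCant, div_pow, one_pow]
  apply one_div_le_one_div_of_le
  · positivity
  · have h1 : (2:ℝ)^(k+1) - 1 ≤ 2^(N+1) - 1 := by
      have : (2:ℝ) ^ (k+1) ≤ 2 ^ (N+1) := pow_le_pow_right₀ (by norm_num) (by omega)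
      linarith
    have h2 : (2:ℝ)^(k+2) - 1 ≤ 2^(N+1) - 1 := by
      have : (2:ℝ) ^ (k+2) ≤ 2 ^ (N+1) := pow_le_pow_right₀ (by norm_num) (by omega)
      linarith
    have hk1 : (0:ℝ) < 2^(k+1) - 1 := two_pow_sub_one_pos k
    have hk2 : (0:ℝ) < 2^(k+2) - 1 := two_pow_sub_one_pos (k+1)
    calc ((2:ℝ)^(k+1) - 1) * (2^(k+2) - 1) ≤ ((2:ℝ)^(N+1) - 1) * (2^(N+1) - 1) := by
          apply mul_le_mul h1 h2 (le_of_lt hk2) (by linarith)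
      _ = ((2:ℝ)^(N+1) - 1)^2 := by ring

lemma leftEndAux_nest : ∀ (w : List Bool) (n : ℕ) (a : ℝ),
    a ≤ leftEndAux n a w ∧ leftEndAux n a w + lCant (n + w.length) ≤ a + lCant n := by
  intro w
  induction w with
  | nil => intro n a; simp [leftEndAux]
  | cons b t ih =>
    intro n a
    set a' : ℝ := if b then a + lCant n - lCant (n + 1) else a with ha'
    have hstep : leftEndAux n a (b :: t) = leftEndAux (n+1) a' t := rfl
    have h1 : a ≤ a' := by
      rcases b with _ | _
      · simp [ha']
      · simp only [ha', if_true]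
        have := lCant_anti (Nat.le_succ n); linarith
    have h2 : a' + lCant (n+1) ≤ a + lCant n := by
      rcases b with _ | _
      · simp only [ha', Bool.false_eq_true, if_false]
        have := lCant_anti (Nat.le_succ n); linarith
      · simp [ha']
    obtain ⟨ih1, ih2⟩ := ih (n+1) a'
    constructor
    · rw [hstep]; linarith
    · rw [hstep]
      have hidx : n + (b :: t).length = (n+1) + t.length := by simp only [List.length_cons]; omega
      rw [hidx]; linarith

lemma sep1D : ∀ (w w' : List Bool), w.length = w'.length → w ≠ w' → ∀ (n : ℕ) (a x y : ℝ),
    x ∈ Set.Icc (leftEndAux n a w) (leftEndAux n a w + lCant (n + w.length)) →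
    y ∈ Set.Icc (leftEndAux n a w') (leftEndAux n a w' + lCant (n + w'.length)) →
    lCant (n + w.length) ^ 2 ≤ |x - y| := by
  intro w
  induction w with
  | nil =>
    intro w' hlen hne
    exact absurd (List.eq_nil_of_length_eq_zero hlen.symm).symm hne
  | cons b t ih =>
    intro w' hlen hne n a x y hx hy
    rcases w' with _ | ⟨b', t'⟩
    · simp at hlen
    · by_cases hb : b = b'
      · subst hb
        have ht : t ≠ t' := fun h => hne (by rw [h])
        have hlen' : t.length = t'.length := by simpa using hlen
        set a' : ℝ := if b then a + lCant n - lCant (n + 1) else a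
        have hidx : n + (b :: t).length = (n+1) + t.length := by simp only [List.length_cons]; omega
        have hidx' : n + (b :: t').length = (n+1) + t'.length := by simp only [List.length_cons]; omega
        rw [show leftEndAux n a (b :: t) = leftEndAux (n+1) a' t from rfl, hidx] at hx
        rw [show leftEndAux n a (b :: t') = leftEndAux (n+1) a' t' from rfl, hidx'] at hy
        have := ih t' hlen' ht (n+1) a' x y hx hy
        rw [hidx]; exact this
      · -- differing first bit
        have hgap : lCant (n + (b :: t).length) ^ 2 ≤ lCant n - 2 * lCant (n+1) := by
          apply gap_lemma; simp only [List.length_cons]; omega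
        -- bounds for a word starting with false: inside [a, a + lCant (n+1)]
        -- for a word starting with true: inside [a + lCant n - lCant (n+1), a + lCant n]
        have key : ∀ (s : List Bool) (z : ℝ), z ∈ Set.Icc (leftEndAux n a (false :: s))
              (leftEndAux n a (false :: s) + lCant (n + (false :: s).length)) →
            z ≤ a + lCant (n+1) := by
          intro s z hz
          have hnest := leftEndAux_nest s (n+1) a
          have hidx : n + (false :: s).length = (n+1) + s.length := by simp only [List.length_cons]; omega
          rw [show leftEndAux n a (false :: s) = leftEndAux (n+1) a s by simp [leftEndAux], hidx] at hz
          exact le_trans hz.2 hnest.2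
        have key' : ∀ (s : List Bool) (z : ℝ), z ∈ Set.Icc (leftEndAux n a (true :: s))
              (leftEndAux n a (true :: s) + lCant (n + (true :: s).length)) →
            a + lCant n - lCant (n+1) ≤ z := by
          intro s z hz
          have hnest := leftEndAux_nest s (n+1) (a + lCant n - lCant (n+1))
          rw [show leftEndAux n a (true :: s)
              = leftEndAux (n+1) (a + lCant n - lCant (n+1)) s by simp [leftEndAux]] at hz
          exact le_trans hnest.1 hz.1
        have hlen2 : (b :: t).length = (b' :: t').length := hlen
        rcases b with _ | _ <;> rcases b' with _ | _
        · exact absurd rfl hb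
        · -- b = false, b' = true : x ≤ a + l_{n+1},  y ≥ a + l_n - l_{n+1}
          have h1 := key t x hx
          have h2 := key' t' y hy
          have : lCant (n + (false :: t).length) ^ 2 ≤ y - x := by linarith
          calc lCant (n + (false :: t).length) ^ 2 ≤ y - x := this
            _ ≤ |x - y| := by rw [abs_sub_comm]; exact le_abs_self _
        · -- b = true, b' = false
          have h1 := key t' y hy
          have h2 := key' t x hx
          have hll : lCant (n + (true :: t).length) = lCant (n + (false :: t').length) := by
            have : n + (true :: t).length = n + (false :: t').length := by
              simp only [List.length_cons] at hlen2 ⊢; omega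
            rw [this]
          have : lCant (n + (true :: t).length) ^ 2 ≤ x - y := by
            rw [hll]; have := hgap; rw [hll] at this; linarith
          exact le_trans this (le_abs_self _)
        · exact absurd rfl hb

lemma leftEndAux_append : ∀ (w t : List Bool) (n : ℕ) (a : ℝ),
    leftEndAux n a (w ++ t) = leftEndAux (n + w.length) (leftEndAux n a w) t := by
  intro w
  induction w with
  | nil => intro t n a; simp [leftEndAux]
  | cons b s ih =>
    intro t n a
    have : leftEndAux n a ((b :: s) ++ t)
        = leftEndAux (n+1) (if b then a + lCant n - lCant (n+1) else a) (s ++ t) := rfl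
    rw [this, ih]
    have hidx : (n+1) + s.length = n + (b :: s).length := by simp only [List.length_cons]; omega
    rw [hidx]; rfl

lemma leftEndAux_replicate (k n : ℕ) (a : ℝ) :
    leftEndAux n a (List.replicate k false) = a := by
  induction k generalizing n with
  | zero => rfl
  | succ m ih => rw [List.replicate_succ]; exact ih (n+1)

lemma mem_cantorStage {x : ℝ} {n : ℕ} : x ∈ cantorStage n ↔
    ∃ w : List Bool, w.length = n ∧ x ∈ Set.Icc (leftEnd w) (leftEnd w + lCant n) := by
  simp only [cantorStage, Set.mem_iUnion, Set.mem_Icc]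
  exact ⟨fun ⟨i, h1, h2⟩ => ⟨i, h1, h2⟩, fun ⟨i, h1, h2⟩ => ⟨i, h1, h2⟩⟩

lemma leftEnd_mem_fatC (w : List Bool) : leftEnd w ∈ fatC := by
  rw [fatC, Set.mem_iInter]
  intro m
  rcases le_or_gt m w.length with hm | hm
  · rw [mem_cantorStage]
    refine ⟨w.take m, by simp [hm], ?_⟩
    have hsplit : leftEnd w = leftEndAux (0 + (w.take m).length) (leftEnd (w.take m)) (w.drop m) := by
      conv_lhs => rw [leftEnd, ← List.take_append_drop m w]
      exact leftEndAux_append _ _ 0 0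
    have hlt : (w.take m).length = m := by simp [hm]
    rw [hlt] at hsplit
    have hnest := leftEndAux_nest (w.drop m) (0 + m) (leftEnd (w.take m))
    rw [hsplit]
    simp only [Nat.zero_add] at hnest hsplit ⊢
    exact ⟨hnest.1, by linarith [hnest.2, lCant_pos (m + (w.drop m).length)]⟩
  · rw [mem_cantorStage]
    refine ⟨w ++ List.replicate (m - w.length) false, by simp; omega, ?_⟩
    have : leftEnd (w ++ List.replicate (m - w.length) false) = leftEnd w := by
      rw [leftEnd, leftEndAux_append, leftEndAux_replicate]; rfl
    rw [this]
    exact ⟨le_refl _, by linarith [lCant_pos m]⟩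

lemma zero_mem_fatC : (0:ℝ) ∈ fatC := by
  have := leftEnd_mem_fatC []
  simpa [leftEnd, leftEndAux] using this

lemma fatC_subset_Icc : fatC ⊆ Set.Icc (0:ℝ) 1 := by
  intro x hx
  have h0 := (Set.mem_iInter.1 hx) 0
  rw [mem_cantorStage] at h0
  obtain ⟨w, hw, hmem⟩ := h0
  have : w = [] := List.eq_nil_of_length_eq_zero hw
  subst this
  simpa [leftEnd, leftEndAux, lCant_zero] using hmem

/-- separation of distinct level-N intervals -/
lemma sep_words {w w' : List Bool} {N : ℕ} (hw : w.length = N) (hw' : w'.length = N)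
    (hne : w ≠ w') {x y : ℝ}
    (hx : x ∈ Set.Icc (leftEnd w) (leftEnd w + lCant N))
    (hy : y ∈ Set.Icc (leftEnd w') (leftEnd w' + lCant N)) :
    lCant N ^ 2 ≤ |x - y| := by
  have := sep1D w w' (by rw [hw, hw']) hne 0 0 x y
    (by rw [leftEnd] at hx; simpa [hw] using hx) (by rw [leftEnd] at hy; simpa [hw'] using hy)
  simpa [hw] using this


lemma mem_cantorStageX {x : ℝ} {n : ℕ} (h : x ∈ fatC) :
    ∃ w : List Bool, w.length = n ∧ x ∈ Set.Icc (leftEnd w) (leftEnd w + lCant n) :=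
  mem_cantorStage.1 (Set.mem_iInter.1 h n)

-- coordinates vs distance
lemma coord_le_dist (x y : EuclideanSpace ℝ (Fin 2)) (i : Fin 2) :
    |x i - y i| ≤ dist x y := by
  rw [EuclideanSpace.dist_eq]
  have h1 : dist (x i) (y i) ^ 2 ≤ ∑ j, dist (x j) (y j) ^ 2 := by
    apply Finset.single_le_sum (f := fun j => dist (x j) (y j) ^ 2)
    · intro j _; positivity
    · exact Finset.mem_univ i
  have h2 : |x i - y i| = Real.sqrt (dist (x i) (y i) ^ 2) := by
    rw [Real.sqrt_sq dist_nonneg, Real.dist_eq]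
  rw [h2]
  exact Real.sqrt_le_sqrt h1

lemma dist_le_coord {x y : EuclideanSpace ℝ (Fin 2)} {c : ℝ} (hc : 0 ≤ c)
    (h : ∀ i, |x i - y i| ≤ c) : dist x y ≤ Real.sqrt 2 * c := by
  rw [EuclideanSpace.dist_eq]
  have key : ∑ j, dist (x j) (y j) ^ 2 ≤ 2 * c ^ 2 := by
    rw [Fin.sum_univ_two]
    have h0 := h 0; have h1 := h 1
    rw [Real.dist_eq, Real.dist_eq]
    nlinarith [abs_nonneg (x 0 - y 0), abs_nonneg (x 1 - y 1), sq_abs (x 0 - y 0), sq_abs (x 1 - y 1)]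
  calc Real.sqrt (∑ j, dist (x j) (y j) ^ 2) ≤ Real.sqrt (2 * c ^ 2) := Real.sqrt_le_sqrt key
    _ = Real.sqrt 2 * c := by
        rw [Real.sqrt_mul (by norm_num), Real.sqrt_sq hc]

/-- The cell of the level-`N` decomposition of `fatSquare` indexed by two words. -/
def cellSet (N : ℕ) (w1 w2 : List Bool) : Set ↥fatSquare :=
  {x | (x : EuclideanSpace ℝ (Fin 2)) 0 ∈ Set.Icc (leftEnd w1) (leftEnd w1 + lCant N) ∧
       (x : EuclideanSpace ℝ (Fin 2)) 1 ∈ Set.Icc (leftEnd w2) (leftEnd w2 + lCant N)}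

def PartN (N : ℕ) : Finset (Set ↥fatSquare) :=
  (Finset.univ : Finset ((Fin N → Bool) × (Fin N → Bool))).image
    (fun p => cellSet N (List.ofFn p.1) (List.ofFn p.2))

lemma exists_word_of_mem {N : ℕ} {Q : Set ↥fatSquare} (hQ : Q ∈ PartN N) :
    ∃ w1 w2 : List Bool, w1.length = N ∧ w2.length = N ∧ Q = cellSet N w1 w2 := by
  rw [PartN, Finset.mem_image] at hQ
  obtain ⟨p, _, hp⟩ := hQ
  exact ⟨_, _, List.length_ofFn, List.length_ofFn, hp.symm⟩

lemma ofFn_cast_eq {w : List Bool} {N : ℕ} (h : w.length = N) :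
    List.ofFn (fun i : Fin N => w.get (Fin.cast h.symm i)) = w := by
  subst h; simp [List.ofFn_get]

lemma cell_mem_PartN {N : ℕ} {w1 w2 : List Bool} (h1 : w1.length = N) (h2 : w2.length = N) :
    cellSet N w1 w2 ∈ PartN N := by
  rw [PartN, Finset.mem_image]
  refine ⟨⟨fun i => w1.get (Fin.cast h1.symm i), fun i => w2.get (Fin.cast h2.symm i)⟩,
    Finset.mem_univ _, ?_⟩
  rw [ofFn_cast_eq h1, ofFn_cast_eq h2]

lemma PartN_cover (N : ℕ) (x : ↥fatSquare) : ∃ Q ∈ PartN N, x ∈ Q := by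
  obtain ⟨h0, h1⟩ := x.2
  obtain ⟨w1, hw1, hx1⟩ := mem_cantorStageX (n := N) h0
  obtain ⟨w2, hw2, hx2⟩ := mem_cantorStageX (n := N) h1
  exact ⟨cellSet N w1 w2, cell_mem_PartN hw1 hw2, hx1, hx2⟩

lemma PartN_nonempty {N : ℕ} {Q : Set ↥fatSquare} (hQ : Q ∈ PartN N) : Q.Nonempty := by
  obtain ⟨w1, w2, h1, h2, rfl⟩ := exists_word_of_mem hQ
  set v : EuclideanSpace ℝ (Fin 2) := (WithLp.equiv 2 (Fin 2 → ℝ)).symm ![leftEnd w1, leftEnd w2]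
    with hv
  have hv0 : v 0 = leftEnd w1 := by simp [hv, WithLp.equiv_symm_apply, PiLp.toLp_apply]
  have hv1 : v 1 = leftEnd w2 := by simp [hv, WithLp.equiv_symm_apply, PiLp.toLp_apply]
  have hmem : v ∈ fatSquare := by
    constructor
    · rw [hv0]; exact leftEnd_mem_fatC w1
    · rw [hv1]; exact leftEnd_mem_fatC w2
  refine ⟨⟨v, hmem⟩, ?_, ?_⟩
  · show v 0 ∈ Set.Icc (leftEnd w1) (leftEnd w1 + lCant N)
    rw [hv0]; exact ⟨le_refl _, by linarith [lCant_pos N]⟩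
  · show v 1 ∈ Set.Icc (leftEnd w2) (leftEnd w2 + lCant N)
    rw [hv1]; exact ⟨le_refl _, by linarith [lCant_pos N]⟩

lemma PartN_sep {N : ℕ} {Q R : Set ↥fatSquare} (hQ : Q ∈ PartN N) (hR : R ∈ PartN N)
    (hne : Q ≠ R) {p q : ↥fatSquare} (hp : p ∈ Q) (hq : q ∈ R) :
    lCant N ^ 2 ≤ dist p q := by
  obtain ⟨w1, w2, h1, h2, rfl⟩ := exists_word_of_mem hQ
  obtain ⟨v1, v2, g1, g2, rfl⟩ := exists_word_of_mem hR
  have hsub : dist p q = dist (p : EuclideanSpace ℝ (Fin 2)) (q : EuclideanSpace ℝ (Fin 2)) :=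
    rfl
  by_cases hw : w1 = v1
  · by_cases hw2 : w2 = v2
    · exact absurd (by rw [hw, hw2]) hne
    · have := sep_words h2 g2 hw2 hp.2 hq.2
      calc lCant N ^ 2 ≤ |(p : EuclideanSpace ℝ (Fin 2)) 1 - (q : EuclideanSpace ℝ (Fin 2)) 1| :=
            this
        _ ≤ dist (p : EuclideanSpace ℝ (Fin 2)) (q : EuclideanSpace ℝ (Fin 2)) :=
            coord_le_dist _ _ 1
        _ = dist p q := hsub.symm
  · have := sep_words h1 g1 hw hp.1 hq.1
    calc lCant N ^ 2 ≤ |(p : EuclideanSpace ℝ (Fin 2)) 0 - (q : EuclideanSpace ℝ (Fin 2)) 0| :=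
          this
      _ ≤ dist (p : EuclideanSpace ℝ (Fin 2)) (q : EuclideanSpace ℝ (Fin 2)) :=
          coord_le_dist _ _ 0
      _ = dist p q := hsub.symm

lemma PartN_diam {N : ℕ} {Q : Set ↥fatSquare} (hQ : Q ∈ PartN N)
    {p q : ↥fatSquare} (hp : p ∈ Q) (hq : q ∈ Q) :
    dist p q ≤ Real.sqrt 2 * lCant N := by
  obtain ⟨w1, w2, h1, h2, rfl⟩ := exists_word_of_mem hQ
  have : dist p q = dist (p : EuclideanSpace ℝ (Fin 2)) (q : EuclideanSpace ℝ (Fin 2)) := rfl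
  rw [this]
  apply dist_le_coord (le_of_lt (lCant_pos N))
  have key : ∀ (a b c : ℝ), a ∈ Set.Icc c (c + lCant N) → b ∈ Set.Icc c (c + lCant N) →
      |a - b| ≤ lCant N := by
    intro a b c ha hb
    simp only [Set.mem_Icc] at ha hb
    rw [abs_sub_le_iff]; constructor <;> linarith [ha.1, ha.2, hb.1, hb.2]
  intro i
  fin_cases i
  · exact key _ _ _ hp.1 hq.1
  · exact key _ _ _ hp.2 hq.2

lemma fatSquare_bound (x y : ↥fatSquare) : dist x y ≤ Real.sqrt 2 := by
  have : dist x y = dist (x : EuclideanSpace ℝ (Fin 2)) (y : EuclideanSpace ℝ (Fin 2)) := rfl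
  rw [this]
  have := dist_le_coord (x := (x : EuclideanSpace ℝ (Fin 2))) (y := y) (c := 1) zero_le_one ?_
  · simpa using this
  · intro i
    have hx := x.2; have hy := y.2
    have hx' : (x : EuclideanSpace ℝ (Fin 2)) i ∈ Set.Icc (0:ℝ) 1 := by
      fin_cases i
      · exact fatC_subset_Icc hx.1
      · exact fatC_subset_Icc hx.2
    have hy' : (y : EuclideanSpace ℝ (Fin 2)) i ∈ Set.Icc (0:ℝ) 1 := by
      fin_cases i
      · exact fatC_subset_Icc hy.1
      · exact fatC_subset_Icc hy.2
    simp only [Set.mem_Icc] at hx' hy'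
    rw [abs_sub_le_iff]
    constructor <;> linarith [hx'.1, hx'.2, hy'.1, hy'.2]

instance : Nonempty ↥fatSquare :=
  ⟨⟨(WithLp.equiv 2 (Fin 2 → ℝ)).symm ![0, 0], by
    constructor
    · simpa [WithLp.equiv_symm_apply, PiLp.toLp_apply] using zero_mem_fatC
    · simpa [WithLp.equiv_symm_apply, PiLp.toLp_apply] using zero_mem_fatC⟩⟩

section AbstractApprox

variable {X : Type*} [MetricSpace X]

/-- infimal distance between two sets -/
def DmSet (A B : Set X) : ℝ := sInf ((fun pq : X × X => dist pq.1 pq.2) '' (A ×ˢ B))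

lemma DmSet_nonneg (A B : Set X) : 0 ≤ DmSet A B := by
  apply Real.sInf_nonneg
  rintro x ⟨⟨p, q⟩, _, rfl⟩
  exact dist_nonneg

lemma DmSet_le_dist {A B : Set X} {p q : X} (hp : p ∈ A) (hq : q ∈ B) :
    DmSet A B ≤ dist p q :=
  csInf_le ⟨0, by rintro x ⟨⟨p', q'⟩, _, rfl⟩; exact dist_nonneg⟩
    ⟨⟨p, q⟩, Set.mk_mem_prod hp hq, rfl⟩

lemma DmSet_self {A : Set X} (h : A.Nonempty) : DmSet A A = 0 :=
  le_antisymm (by simpa using DmSet_le_dist h.some_mem h.some_mem) (DmSet_nonneg A A)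

lemma DmSet_exists_lt {A B : Set X} (hA : A.Nonempty) (hB : B.Nonempty) {κ : ℝ} (hκ : 0 < κ) :
    ∃ p ∈ A, ∃ q ∈ B, dist p q < DmSet A B + κ := by
  have hne : ((fun pq : X × X => dist pq.1 pq.2) '' (A ×ˢ B)).Nonempty :=
    ⟨_, ⟨⟨hA.some, hB.some⟩, Set.mk_mem_prod hA.some_mem hB.some_mem, rfl⟩⟩
  obtain ⟨v, ⟨⟨p, q⟩, hpq, rfl⟩, hv⟩ := exists_lt_of_csInf_lt hne
    (lt_add_of_pos_right _ hκ : sInf _ < sInf _ + κ)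
  exact ⟨p, hpq.1, q, hpq.2, hv⟩

lemma DmSet_sep {P : Finset (Set X)} {s : ℝ}
    (hsep : ∀ Q ∈ P, ∀ R ∈ P, Q ≠ R → ∀ p ∈ Q, ∀ q ∈ R, s ≤ dist p q)
    {A B : Set X} (hA : A ∈ P) (hB : B ∈ P) (hab : A ≠ B)
    (hAne : A.Nonempty) (hBne : B.Nonempty) : s ≤ DmSet A B := by
  have hnim : ((fun pq : X × X => dist pq.1 pq.2) '' (A ×ˢ B)).Nonempty :=
    ⟨_, ⟨⟨hAne.some, hBne.some⟩, Set.mk_mem_prod hAne.some_mem hBne.some_mem, rfl⟩⟩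
  refine le_csInf hnim ?_
  rintro v ⟨⟨p, q⟩, hpq, rfl⟩
  exact hsep A hA B hB hab p hpq.1 q hpq.2

/-- cost of a chain of cells -/
def chainCost (α : ℝ) : List (Set X) → ℝ
  | [] => 0
  | [_] => 0
  | A :: B :: l => DmSet A B ^ α + chainCost α (B :: l)

def sumDm : List (Set X) → ℝ
  | [] => 0
  | [_] => 0
  | A :: B :: l => DmSet A B + sumDm (B :: l)

def njumps : List (Set X) → ℕ
  | [] => 0
  | [_] => 0
  | A :: B :: l => (if A = B then 0 else 1) + njumps (B :: l)

lemma chainCost_nonneg (α : ℝ) : ∀ c : List (Set X), 0 ≤ chainCost α c := by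
  intro c
  induction c with
  | nil => simp [chainCost]
  | cons A t ih =>
    cases t with
    | nil => simp [chainCost]
    | cons B l =>
      have h := Real.rpow_nonneg (DmSet_nonneg A B) α
      simp only [chainCost] at ih ⊢
      linarith

lemma sumDm_nonneg : ∀ c : List (Set X), 0 ≤ sumDm c := by
  intro c
  induction c with
  | nil => simp [sumDm]
  | cons A t ih =>
    cases t with
    | nil => simp [sumDm]
    | cons B l =>
      have := DmSet_nonneg A B
      simp only [sumDm] at ih ⊢
      linarith

def chainsIn (P : Finset (Set X)) (A B : Set X) : Set (List (Set X)) :=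
  {c | c.head? = some A ∧ c.getLast? = some B ∧ ∀ e ∈ c, e ∈ (P : Set (Set X))}

def rhoC (α : ℝ) (P : Finset (Set X)) (A B : Set X) : ℝ :=
  sInf (chainCost α '' chainsIn P A B)

lemma pair_mem_chainsIn {P : Finset (Set X)} {A B : Set X} (hA : A ∈ P) (hB : B ∈ P) :
    [A, B] ∈ chainsIn P A B := by
  refine ⟨rfl, rfl, ?_⟩
  intro e he
  simp only [List.mem_cons, List.not_mem_nil, or_false] at he
  rcases he with rfl | rfl
  · simpa using hA
  · simpa using hB

lemma single_mem_chainsIn {P : Finset (Set X)} {A : Set X} (hA : A ∈ P) :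
    [A] ∈ chainsIn P A A := by
  refine ⟨rfl, rfl, ?_⟩
  intro e he
  simp at he; subst he; simpa using hA

lemma rhoC_bddBelow (α : ℝ) (P : Finset (Set X)) (A B : Set X) :
    BddBelow (chainCost α '' chainsIn P A B) :=
  ⟨0, by rintro v ⟨c, _, rfl⟩; exact chainCost_nonneg α c⟩

lemma rhoC_nonneg (α : ℝ) (P : Finset (Set X)) (A B : Set X) : 0 ≤ rhoC α P A B := by
  apply Real.sInf_nonneg
  rintro v ⟨c, _, rfl⟩
  exact chainCost_nonneg α c

lemma rhoC_le_pair {α : ℝ} {P : Finset (Set X)} {A B : Set X} (hA : A ∈ P) (hB : B ∈ P) :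
    rhoC α P A B ≤ DmSet A B ^ α := by
  have : chainCost α [A, B] = DmSet A B ^ α := by simp [chainCost]
  calc rhoC α P A B ≤ chainCost α [A, B] :=
        csInf_le (rhoC_bddBelow α P A B) ⟨_, pair_mem_chainsIn hA hB, rfl⟩
    _ = _ := this

lemma rhoC_self {α : ℝ} {P : Finset (Set X)} {A : Set X} (hA : A ∈ P) :
    rhoC α P A A = 0 := by
  refine le_antisymm ?_ (rhoC_nonneg α P A A)
  have : chainCost α [A] = 0 := rfl
  calc rhoC α P A A ≤ chainCost α [A] :=
        csInf_le (rhoC_bddBelow α P A A) ⟨_, single_mem_chainsIn hA, rfl⟩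
    _ = 0 := this

lemma exists_concat_of_getLast? {β : Type*} : ∀ {l : List β} {b : β},
    l.getLast? = some b → ∃ l', l = l' ++ [b] := by
  intro l
  induction l with
  | nil => intro b h; simp at h
  | cons x t ih =>
    intro b h
    cases t with
    | nil => simp at h; subst h; exact ⟨[], rfl⟩
    | cons y s =>
      rw [List.getLast?_cons_cons] at h
      obtain ⟨l', hl'⟩ := ih h
      exact ⟨x :: l', by rw [List.cons_append, ← hl']⟩

lemma chainCost_glue (α : ℝ) : ∀ (c1 : List (Set X)) (B : Set X) (c2 : List (Set X)),
    chainCost α (c1 ++ B :: c2) = chainCost α (c1 ++ [B]) + chainCost α (B :: c2) := by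
  intro c1
  induction c1 with
  | nil => intro B c2; simp [chainCost]
  | cons x t ih =>
    intro B c2
    cases t with
    | nil =>
      show chainCost α (x :: B :: c2) = chainCost α (x :: [B]) + chainCost α (B :: c2)
      simp [chainCost]
    | cons y s =>
      have h1 : chainCost α ((x :: y :: s) ++ B :: c2)
          = DmSet x y ^ α + chainCost α ((y :: s) ++ B :: c2) := rfl
      have h2 : chainCost α ((x :: y :: s) ++ [B])
          = DmSet x y ^ α + chainCost α ((y :: s) ++ [B]) := rfl
      rw [h1, h2, ih]; ring

lemma glue_mem_chainsIn {α : ℝ} {P : Finset (Set X)} {A B C : Set X} {c1 c2 : List (Set X)}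
    (h1 : c1 ∈ chainsIn P A B) (h2 : c2 ∈ chainsIn P B C) :
    ∃ c ∈ chainsIn P A C, chainCost α c = chainCost α c1 + chainCost α c2 := by
  obtain ⟨hh1, hl1, hm1⟩ := h1
  obtain ⟨hh2, hl2, hm2⟩ := h2
  obtain ⟨c1', rfl⟩ := exists_concat_of_getLast? hl1
  cases c2 with
  | nil => simp at hh2
  | cons B' t =>
    have hB' : B' = B := by simpa using hh2
    rw [hB'] at hl2 hm2
    refine ⟨c1' ++ B :: t, ⟨?_, ?_, ?_⟩, ?_⟩
    · cases c1' with
      | nil => simpa using hh1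
      | cons z w =>
        rw [List.head?_append_of_ne_nil _ (by simp)] at hh1 ⊢
        exact hh1
    · rw [List.getLast?_append_cons]
      rcases t with _ | ⟨u, v⟩
      · simpa using hl2
      · rw [List.getLast?_cons_cons] at hl2 ⊢; exact hl2
    · intro e he
      rw [List.mem_append] at he
      rcases he with he | he
      · exact hm1 e (by simp [he])
      · exact hm2 e he
    · rw [hB']; exact chainCost_glue α c1' B t

lemma rhoC_triangle {α : ℝ} {P : Finset (Set X)} {A B C : Set X}
    (hA : A ∈ P) (hB : B ∈ P) (hC : C ∈ P) :
    rhoC α P A C ≤ rhoC α P A B + rhoC α P B C := by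
  have key : ∀ c1 ∈ chainsIn P A B, ∀ c2 ∈ chainsIn P B C,
      rhoC α P A C ≤ chainCost α c1 + chainCost α c2 := by
    intro c1 hc1 c2 hc2
    obtain ⟨c, hc, hcost⟩ := glue_mem_chainsIn hc1 hc2
    calc rhoC α P A C ≤ chainCost α c := csInf_le (rhoC_bddBelow α P A C) ⟨_, hc, rfl⟩
      _ = _ := hcost
  have step1 : ∀ c1 ∈ chainsIn P A B, rhoC α P A C - chainCost α c1 ≤ rhoC α P B C := by
    intro c1 hc1
    refine le_csInf ⟨_, ⟨_, pair_mem_chainsIn hB hC, rfl⟩⟩ ?_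
    rintro v ⟨c2, hc2, rfl⟩
    linarith [key c1 hc1 c2 hc2]
  have step2 : rhoC α P A C - rhoC α P B C ≤ rhoC α P A B := by
    refine le_csInf ⟨_, ⟨_, pair_mem_chainsIn hA hB, rfl⟩⟩ ?_
    rintro v ⟨c1, hc1, rfl⟩
    linarith [step1 c1 hc1]
  linarith

lemma rpow_subadd {a b : ℝ} (ha : 0 ≤ a) (hb : 0 ≤ b) {q : ℝ} (h0 : 0 ≤ q) (h1 : q ≤ 1) :
    (a + b) ^ q ≤ a ^ q + b ^ q := by
  lift a to ℝ≥0 using ha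
  lift b to ℝ≥0 using hb
  have := NNReal.rpow_add_le_add_rpow a b h0 h1
  have h2 : ((a + b : ℝ≥0) : ℝ) ^ q = (((a + b) ^ q : ℝ≥0) : ℝ) := by
    rw [NNReal.coe_rpow]
  push_cast at this ⊢
  exact_mod_cast this


lemma njumps_cost {α s : ℝ} (h0 : 0 ≤ α) (hs : 0 ≤ s) {P : Finset (Set X)}
    (hsep : ∀ Q ∈ P, ∀ R ∈ P, Q ≠ R → ∀ p ∈ Q, ∀ q ∈ R, s ≤ dist p q)
    (hne : ∀ Q ∈ P, Q.Nonempty) :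
    ∀ c : List (Set X), (∀ e ∈ c, e ∈ (P : Set (Set X))) →
      (njumps c : ℝ) * s ^ α ≤ chainCost α c := by
  intro c
  induction c with
  | nil => intro _; simp [njumps, chainCost]
  | cons A t ih =>
    intro hc
    cases t with
    | nil => simp [njumps, chainCost]
    | cons B l =>
      have hc' : ∀ e ∈ B :: l, e ∈ (P : Set (Set X)) := fun e he => hc e (List.mem_cons_of_mem _ he)
      have hA : A ∈ P := by simpa using hc A List.mem_cons_self
      have hB : B ∈ P := by simpa using hc B (List.mem_cons_of_mem _ List.mem_cons_self)
      have ihB := ih hc'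
      have hcost : chainCost α (A :: B :: l) = DmSet A B ^ α + chainCost α (B :: l) := rfl
      have hj : njumps (A :: B :: l) = (if A = B then 0 else 1) + njumps (B :: l) := rfl
      by_cases hab : A = B
      · rw [hcost, hj, if_pos hab]
        have := Real.rpow_nonneg (DmSet_nonneg A B) α
        push_cast
        linarith
      · rw [hcost, hj, if_neg hab]
        have hDm : s ≤ DmSet A B := DmSet_sep hsep hA hB hab (hne A hA) (hne B hB)
        have : s ^ α ≤ DmSet A B ^ α := Real.rpow_le_rpow hs hDm h0
        push_cast
        nlinarith [Real.rpow_nonneg (le_trans hs hDm) α]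

lemma sumDm_cost {α : ℝ} (h0 : 0 < α) (h1 : α ≤ 1) :
    ∀ c : List (Set X), sumDm c ^ α ≤ chainCost α c := by
  intro c
  induction c with
  | nil => simp [sumDm, chainCost, Real.zero_rpow h0.ne']
  | cons A t ih =>
    cases t with
    | nil => simp [sumDm, chainCost, Real.zero_rpow h0.ne']
    | cons B l =>
      have h2 : sumDm (A :: B :: l) = DmSet A B + sumDm (B :: l) := rfl
      have h3 : chainCost α (A :: B :: l) = DmSet A B ^ α + chainCost α (B :: l) := rfl
      rw [h2, h3]
      calc (DmSet A B + sumDm (B :: l)) ^ α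
          ≤ DmSet A B ^ α + sumDm (B :: l) ^ α :=
            rpow_subadd (DmSet_nonneg A B) (sumDm_nonneg _) h0.le h1
        _ ≤ DmSet A B ^ α + chainCost α (B :: l) := by linarith [ih]

lemma chain_dist {P : Finset (Set X)} {D : ℝ}
    (hdiam : ∀ Q ∈ P, ∀ p ∈ Q, ∀ q ∈ Q, dist p q ≤ D)
    (hne : ∀ Q ∈ P, Q.Nonempty) {κ : ℝ} (hκ : 0 < κ) :
    ∀ (c : List (Set X)), (∀ e ∈ c, e ∈ (P : Set (Set X))) →
    ∀ {A B : Set X} {x y : X}, c.head? = some A → c.getLast? = some B → x ∈ A → y ∈ B →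
    dist x y ≤ sumDm c + njumps c * κ + (njumps c + 1) * D := by
  intro c
  induction c with
  | nil => intro _ A B x y hh; simp at hh
  | cons Q t ih =>
    intro hc A B x y hh hl hx hy
    have hQA : Q = A := by simpa using hh
    have hxQ : x ∈ Q := hQA ▸ hx
    have hQ : Q ∈ P := by simpa using hc Q List.mem_cons_self
    cases t with
    | nil =>
      have hQB : Q = B := by simpa using hl
      have hyQ : y ∈ Q := hQB ▸ hy
      have := hdiam Q hQ x hxQ y hyQ
      simp only [sumDm, njumps]
      push_cast
      linarith
    | cons R l =>
      have hc' : ∀ e ∈ R :: l, e ∈ (P : Set (Set X)) := fun e he => hc e (List.mem_cons_of_mem _ he)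
      have hR : R ∈ P := by simpa using hc R (List.mem_cons_of_mem _ List.mem_cons_self)
      have hl' : (R :: l).getLast? = some B := by rwa [List.getLast?_cons_cons] at hl
      have hsum : sumDm (Q :: R :: l) = DmSet Q R + sumDm (R :: l) := rfl
      have hjump : njumps (Q :: R :: l) = (if Q = R then 0 else 1) + njumps (R :: l) := rfl
      by_cases hQR : Q = R
      · have hxR : x ∈ R := hQR ▸ hxQ
        have hdist := ih hc' (A := R) rfl hl' hxR hy
        have hDm0 : DmSet Q R = 0 := by rw [hQR]; exact DmSet_self (hne R hR)
        rw [hsum, hjump, if_pos hQR, hDm0]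
        push_cast
        linarith
      · obtain ⟨p, hp, q, hq, hpq⟩ := DmSet_exists_lt (hne Q hQ) (hne R hR) hκ
        have h4 : dist x y ≤ dist x p + dist p q + dist q y := dist_triangle4 x p q y
        have h5 : dist x p ≤ D := hdiam Q hQ x hxQ p hp
        have h6 := ih hc' (A := R) rfl hl' hq hy
        rw [hsum, hjump, if_neg hQR]
        push_cast
        linarith

lemma chain_lower {α s D : ℝ} (hα0 : 0 < α) (hα1 : α ≤ 1) (hs : 0 < s) (hD : 0 ≤ D)
    {P : Finset (Set X)}
    (hsep : ∀ Q ∈ P, ∀ R ∈ P, Q ≠ R → ∀ p ∈ Q, ∀ q ∈ R, s ≤ dist p q)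
    (hne : ∀ Q ∈ P, Q.Nonempty)
    (hdiam : ∀ Q ∈ P, ∀ p ∈ Q, ∀ q ∈ Q, dist p q ≤ D)
    (hbound : ∀ x y : X, dist x y ≤ Real.sqrt 2)
    {A B : Set X} {c : List (Set X)} (hc : c ∈ chainsIn P A B)
    {x y : X} (hx : x ∈ A) (hy : y ∈ B) :
    dist x y ^ α ≤ chainCost α c + ((2 / s ^ α + 1) * D) ^ α := by
  obtain ⟨hh, hl, hm⟩ := hc
  have hspos : 0 < s ^ α := Real.rpow_pos_of_pos hs α
  have hbase : 0 ≤ (2 / s ^ α + 1) * D := by positivity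
  have hErr : 0 ≤ ((2 / s ^ α + 1) * D) ^ α := Real.rpow_nonneg hbase α
  rcases le_or_gt 2 (chainCost α c) with hcost | hcost
  · have h1 : dist x y ^ α ≤ Real.sqrt 2 ^ α :=
      Real.rpow_le_rpow dist_nonneg (hbound x y) hα0.le
    have hsq1 : (1:ℝ) ≤ Real.sqrt 2 := by
      rw [show (1:ℝ) = Real.sqrt 1 from (Real.sqrt_one).symm]
      exact Real.sqrt_le_sqrt (by norm_num)
    have h2 : Real.sqrt 2 ^ α ≤ Real.sqrt 2 ^ (1:ℝ) :=
      Real.rpow_le_rpow_of_exponent_le hsq1 hα1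
    have h3 : Real.sqrt 2 ≤ 2 := by
      nlinarith [Real.sq_sqrt (by norm_num : (0:ℝ) ≤ 2), Real.sqrt_nonneg 2]
    rw [Real.rpow_one] at h2
    linarith
  · set j : ℝ := (njumps c : ℝ) with hj
    have hj0 : 0 ≤ j := by positivity
    have hstep : dist x y ≤ sumDm c + (j + 1) * D := by
      apply le_of_forall_pos_le_add
      intro ε hε
      have hκ : 0 < ε / (j + 1) := by positivity
      have hd := chain_dist hdiam hne hκ c hm hh hl hx hy
      have hfrac : j * (ε / (j + 1)) ≤ ε := by
        rw [mul_div_assoc']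
        rw [div_le_iff₀ (by linarith : (0:ℝ) < j + 1)]
        nlinarith
      linarith
    have h2 : dist x y ^ α ≤ (sumDm c + (j + 1) * D) ^ α :=
      Real.rpow_le_rpow dist_nonneg hstep hα0.le
    have h3 : (sumDm c + (j + 1) * D) ^ α ≤ sumDm c ^ α + ((j + 1) * D) ^ α :=
      rpow_subadd (sumDm_nonneg c) (by positivity) hα0.le hα1
    have h4 : sumDm c ^ α ≤ chainCost α c := sumDm_cost hα0 hα1 c
    have h5 : j ≤ 2 / s ^ α := by
      have := njumps_cost hα0.le hs.le hsep hne c hm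
      rw [le_div_iff₀ hspos]
      linarith
    have h6 : ((j + 1) * D) ^ α ≤ ((2 / s ^ α + 1) * D) ^ α := by
      apply Real.rpow_le_rpow (by positivity) ?_ hα0.le
      exact mul_le_mul_of_nonneg_right (by linarith) hD
    linarith

theorem approx_finite_range [Nonempty X]
    (α s D : ℝ) (hα0 : 0 < α) (hα1 : α ≤ 1) (hs : 0 < s) (hD : 0 ≤ D)
    (P : Finset (Set X))
    (hcov : ∀ x : X, ∃ Q ∈ P, x ∈ Q)
    (hne : ∀ Q ∈ P, Q.Nonempty)
    (hsep : ∀ Q ∈ P, ∀ R ∈ P, Q ≠ R → ∀ p ∈ Q, ∀ q ∈ R, s ≤ dist p q)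
    (hdiam : ∀ Q ∈ P, ∀ p ∈ Q, ∀ q ∈ Q, dist p q ≤ D)
    (hbound : ∀ x y : X, dist x y ≤ Real.sqrt 2)
    (f : X → ℝ) (hf : ∀ x y, |f x - f y| ≤ dist x y ^ α) :
    ∃ g : X → ℝ, Continuous g ∧ (∀ x y, |g x - g y| ≤ dist x y ^ α) ∧
      (Set.range g).Finite ∧
      ∀ x, |g x - f x| ≤ D ^ α + ((2 / s ^ α + 1) * D) ^ α := by
  classical
  choose cellF hcellP hcellMem using hcov
  have hPne : P.Nonempty := ⟨cellF (Classical.arbitrary X), hcellP _⟩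
  set rep : Set X → X := fun Q => if h : Q.Nonempty then h.some else Classical.arbitrary X
    with hrepdef
  have hrep : ∀ Q ∈ P, rep Q ∈ Q := by
    intro Q hQ
    simp only [hrepdef, dif_pos (hne Q hQ)]
    exact (hne Q hQ).some_mem
  set u : Set X → ℝ := fun A => P.sup' hPne (fun R => f (rep R) - rhoC α P A R) with hu
  set g : X → ℝ := fun x => u (cellF x) with hg
  set Err : ℝ := ((2 / s ^ α + 1) * D) ^ α with hErrDef
  have hErr : 0 ≤ Err := Real.rpow_nonneg (by positivity) α
  -- u is 1-Lipschitz for rhoC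
  have hulip : ∀ A ∈ P, ∀ B ∈ P, u A - u B ≤ rhoC α P B A := by
    intro A hA B hB
    rw [hu, sub_le_iff_le_add]
    apply Finset.sup'_le
    intro R hR
    have htri : rhoC α P B R ≤ rhoC α P B A + rhoC α P A R := rhoC_triangle hB hA hR
    have hle : f (rep R) - rhoC α P B R ≤ P.sup' hPne (fun R => f (rep R) - rhoC α P B R) :=
      Finset.le_sup' (fun R => f (rep R) - rhoC α P B R) hR
    linarith
  -- cell uniqueness wrt a point
  have hcellEq : ∀ x y : X, dist x y < s → cellF x = cellF y := by
    intro x y hxy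
    by_contra hne'
    have := hsep _ (hcellP x) _ (hcellP y) hne' x (hcellMem x) y (hcellMem y)
    linarith
  refine ⟨g, ?_, ?_, ?_, ?_⟩
  · -- continuity
    rw [continuous_iff_continuousAt]
    intro x
    have hev : ∀ᶠ y in nhds x, g y = g x := by
      rw [Metric.eventually_nhds_iff]
      refine ⟨s, hs, ?_⟩
      intro y hyx
      have : cellF x = cellF y := hcellEq x y (by rwa [dist_comm])
      rw [hg]; simp only; rw [this]
    exact ContinuousAt.congr continuousAt_const (by filter_upwards [hev] with y hy using hy.symm)
  · -- Hölder
    intro x y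
    by_cases hcc : cellF x = cellF y
    · rw [hg]; simp only [hcc, sub_self, abs_zero]
      exact Real.rpow_nonneg dist_nonneg α
    · have hQ := hcellP x; have hR := hcellP y
      have h1 : u (cellF x) - u (cellF y) ≤ rhoC α P (cellF y) (cellF x) := hulip _ hQ _ hR
      have h2 : u (cellF y) - u (cellF x) ≤ rhoC α P (cellF x) (cellF y) := hulip _ hR _ hQ
      have h3 : rhoC α P (cellF y) (cellF x) ≤ DmSet (cellF y) (cellF x) ^ α := rhoC_le_pair hR hQ
      have h4 : rhoC α P (cellF x) (cellF y) ≤ DmSet (cellF x) (cellF y) ^ α := rhoC_le_pair hQ hR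
      have h5 : DmSet (cellF y) (cellF x) ≤ dist x y := by
        rw [dist_comm]; exact DmSet_le_dist (hcellMem y) (hcellMem x)
      have h6 : DmSet (cellF x) (cellF y) ≤ dist x y :=
        DmSet_le_dist (hcellMem x) (hcellMem y)
      have h7 : DmSet (cellF y) (cellF x) ^ α ≤ dist x y ^ α :=
        Real.rpow_le_rpow (DmSet_nonneg _ _) h5 hα0.le
      have h8 : DmSet (cellF x) (cellF y) ^ α ≤ dist x y ^ α :=
        Real.rpow_le_rpow (DmSet_nonneg _ _) h6 hα0.le
      rw [abs_sub_le_iff]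
      constructor <;> [skip; skip]
      · rw [hg]; simp only; linarith
      · rw [hg]; simp only; linarith
  · -- finite range
    apply Set.Finite.subset (Set.Finite.image u P.finite_toSet)
    rintro v ⟨x, rfl⟩
    exact ⟨cellF x, by simpa using hcellP x, rfl⟩
  · -- closeness
    intro x
    set Q := cellF x with hQdef
    have hQ : Q ∈ P := hcellP x
    have hxQ : x ∈ Q := hcellMem x
    have hlow : f x - D ^ α ≤ g x := by
      have h1 : f (rep Q) - rhoC α P Q Q ≤ u Q := by
        rw [hu]
        exact Finset.le_sup' (fun R => f (rep R) - rhoC α P Q R) hQ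
      rw [rhoC_self hQ, sub_zero] at h1
      have h2 : |f (rep Q) - f x| ≤ dist (rep Q) x ^ α := hf _ _
      have h3 : dist (rep Q) x ≤ D := hdiam Q hQ _ (hrep Q hQ) x hxQ
      have h4 : dist (rep Q) x ^ α ≤ D ^ α := Real.rpow_le_rpow dist_nonneg h3 hα0.le
      have h5 : f x - f (rep Q) ≤ D ^ α := by
        have := abs_le.1 h2
        linarith [this.1]
      rw [hg]
      simp only
      rw [← hQdef]
      linarith
    have hhigh : g x ≤ f x + Err := by
      rw [hg]; simp only; rw [← hQdef, hu]; simp only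
      apply Finset.sup'_le
      intro R hR
      have hrepR : rep R ∈ R := hrep R hR
      have hrho : dist x (rep R) ^ α - Err ≤ rhoC α P Q R := by
        rw [hErrDef]
        refine le_csInf ⟨_, ⟨_, pair_mem_chainsIn hQ hR, rfl⟩⟩ ?_
        rintro v ⟨c, hcmem, rfl⟩
        have := chain_lower hα0 hα1 hs hD hsep hne hdiam hbound hcmem hxQ hrepR
        linarith
      have h2 : |f (rep R) - f x| ≤ dist (rep R) x ^ α := hf _ _
      have h3 : f (rep R) - f x ≤ dist x (rep R) ^ α := by
        rw [dist_comm]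
        linarith [(abs_le.1 h2).2]
      linarith
    rw [abs_sub_le_iff]
    have hDa : 0 ≤ D ^ α := Real.rpow_nonneg hD α
    constructor
    · linarith
    · linarith

end AbstractApprox


----------------------------------------------------------------
-- choosing the level N

open Filter

lemma tendsto_lCant : Tendsto lCant atTop (𝓝 0) := by
  apply squeeze_zero (fun n => (lCant_pos n).le) lCant_le_half_pow
  exact tendsto_pow_atTop_nhds_zero_of_lt_one (by norm_num) (by norm_num)

lemma tendsto_lCant_rpow (c : ℝ) (hc : 0 < c) :
    Tendsto (fun N => lCant N ^ c) atTop (𝓝 0) := by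
  have h2 : ContinuousAt (fun x : ℝ => x ^ c) 0 :=
    Real.continuousAt_rpow_const 0 c (Or.inr hc.le)
  have h3 := h2.tendsto.comp tendsto_lCant
  simpa [Function.comp_def, Real.zero_rpow hc.ne'] using h3

lemma holder_approx (α : ℝ) (hα0 : 0 < α) (hα2 : α < 1/2) {ε : ℝ} (hε : 0 < ε)
    (f : ↥fatSquare → ℝ)
    (hf : ∀ x y : ↥fatSquare, |f x - f y| ≤ dist x y ^ α) :
    ∃ g : ↥fatSquare → ℝ, Continuous g ∧ (∀ x y, |g x - g y| ≤ dist x y ^ α) ∧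
      (Set.range g).Finite ∧ ∀ x, |g x - f x| ≤ ε := by
  have hα1 : α ≤ 1 := by linarith
  -- pick N
  have hc2 : 0 < (1 - 2*α) * α := by nlinarith
  have t1 := (tendsto_lCant_rpow α hα0).const_mul (2:ℝ)
  have t2 := (tendsto_lCant_rpow ((1 - 2*α)*α) hc2).const_mul (6:ℝ)
  have t3 := t1.add t2
  rw [mul_zero, mul_zero, add_zero] at t3
  have hev : ∀ᶠ N in atTop, 2 * lCant N ^ α + 6 * lCant N ^ ((1 - 2*α)*α) < ε :=
    t3.eventually_lt_const hε
  obtain ⟨N, hN⟩ := hev.exists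
  set l : ℝ := lCant N with hldef
  have hl0 : 0 < l := lCant_pos N
  have hl1 : l ≤ 1 := lCant_le_one N
  set s : ℝ := l ^ 2 with hsdef
  set D : ℝ := Real.sqrt 2 * l with hDdef
  have hs : 0 < s := by positivity
  have hD : 0 ≤ D := by positivity
  obtain ⟨g, hcont, hhold, hfin, hclose⟩ :=
    approx_finite_range α s D hα0 hα1 hs hD (PartN N) (PartN_cover N)
      (fun Q hQ => PartN_nonempty hQ)
      (fun Q hQ R hR hne p hp q hq => PartN_sep hQ hR hne hp hq)
      (fun Q hQ p hp q hq => PartN_diam hQ hp hq)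
      fatSquare_bound f hf
  refine ⟨g, hcont, hhold, hfin, fun x => le_trans (hclose x) ?_⟩
  -- numeric bound :  D^α + ((2/s^α+1)*D)^α ≤ 2 l^α + 6 l^((1-2α)α) < ε
  have hsqrt2 : Real.sqrt 2 ≤ 2 := by
    nlinarith [Real.sq_sqrt (by norm_num : (0:ℝ) ≤ 2), Real.sqrt_nonneg 2]
  have hsqrt0 : 0 ≤ Real.sqrt 2 := Real.sqrt_nonneg 2
  have b1 : D ^ α ≤ 2 * l ^ α := by
    have h1 : D ≤ 2 * l := by
      rw [hDdef]; exact mul_le_mul_of_nonneg_right hsqrt2 hl0.le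
    calc D ^ α ≤ (2 * l) ^ α := Real.rpow_le_rpow hD h1 hα0.le
      _ = 2 ^ α * l ^ α := Real.mul_rpow (by norm_num) hl0.le
      _ ≤ 2 * l ^ α := by
          have h2 : (2:ℝ) ^ α ≤ 2 ^ (1:ℝ) := Real.rpow_le_rpow_of_exponent_le one_le_two hα1
          rw [Real.rpow_one] at h2
          exact mul_le_mul_of_nonneg_right h2 (Real.rpow_nonneg hl0.le α)
  have b2 : s ^ α = l ^ (2*α) := by
    rw [hsdef, ← Real.rpow_natCast l 2, ← Real.rpow_mul hl0.le]
    norm_num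
  have hs1 : s ^ α ≤ 1 := by
    rw [b2]
    exact Real.rpow_le_one hl0.le hl1 (by positivity)
  have hspos : 0 < s ^ α := Real.rpow_pos_of_pos hs α
  have b3 : 2 / s ^ α + 1 ≤ 3 / s ^ α := by
    have : 1 ≤ 1 / s ^ α := by
      rw [le_div_iff₀ hspos]; linarith
    have h23 : (3:ℝ) / s ^ α = 2 / s ^ α + 1 / s ^ α := by ring
    linarith
  have b4 : (2 / s ^ α + 1) * D ≤ 6 * l ^ (1 - 2*α) := by
    have h1 : (2 / s ^ α + 1) * D ≤ (3 / s ^ α) * D := mul_le_mul_of_nonneg_right b3 hD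
    have h2 : (3 / s ^ α) * D = 3 * Real.sqrt 2 * (l / l ^ (2*α)) := by
      rw [hDdef, b2]; ring
    have h3 : l / l ^ (2*α) = l ^ (1 - 2*α) := by
      rw [Real.rpow_sub hl0, Real.rpow_one]
    have h4 : 3 * Real.sqrt 2 ≤ 6 := by nlinarith
    have h5 : 0 ≤ l ^ (1 - 2*α) := Real.rpow_nonneg hl0.le _
    calc (2 / s ^ α + 1) * D ≤ (3 / s ^ α) * D := h1
      _ = 3 * Real.sqrt 2 * (l ^ (1 - 2*α)) := by rw [h2, h3]
      _ ≤ 6 * l ^ (1 - 2*α) := mul_le_mul_of_nonneg_right h4 h5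
  have b5 : ((2 / s ^ α + 1) * D) ^ α ≤ 6 * l ^ ((1 - 2*α)*α) := by
    have h0 : 0 ≤ (2 / s ^ α + 1) * D := by positivity
    calc ((2 / s ^ α + 1) * D) ^ α ≤ (6 * l ^ (1 - 2*α)) ^ α :=
          Real.rpow_le_rpow h0 b4 hα0.le
      _ = 6 ^ α * (l ^ (1 - 2*α)) ^ α := Real.mul_rpow (by norm_num) (Real.rpow_nonneg hl0.le _)
      _ ≤ 6 * l ^ ((1 - 2*α)*α) := by
          have h2 : (6:ℝ) ^ α ≤ 6 ^ (1:ℝ) :=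
            Real.rpow_le_rpow_of_exponent_le (by norm_num) hα1
          rw [Real.rpow_one] at h2
          rw [← Real.rpow_mul hl0.le]
          exact mul_le_mul_of_nonneg_right h2 (Real.rpow_nonneg hl0.le _)
  linarith

----------------------------------------------------------------
-- the function space

lemma sqrt_two_rpow_le_two {α : ℝ} (hα0 : 0 < α) (hα1 : α ≤ 1) : Real.sqrt 2 ^ α ≤ 2 := by
  have hsq1 : (1:ℝ) ≤ Real.sqrt 2 := by
    rw [show (1:ℝ) = Real.sqrt 1 from (Real.sqrt_one).symm]
    exact Real.sqrt_le_sqrt (by norm_num)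
  have h2 : Real.sqrt 2 ^ α ≤ Real.sqrt 2 ^ (1:ℝ) :=
    Real.rpow_le_rpow_of_exponent_le hsq1 hα1
  rw [Real.rpow_one] at h2
  nlinarith [Real.sq_sqrt (by norm_num : (0:ℝ) ≤ 2), Real.sqrt_nonneg 2]

lemma isClosed_holderBall (α : ℝ) : IsClosed (HolderBall α fatSquare) := by
  have : HolderBall α fatSquare = ⋂ (x : ↥fatSquare) (y : ↥fatSquare),
      {f : BoundedContinuousFunction ↥fatSquare ℝ |
        |f x - f y| ≤ dist (x : EuclideanSpace ℝ (Fin 2)) (y : EuclideanSpace ℝ (Fin 2)) ^ α} := by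
    ext f; simp [HolderBall, Set.mem_iInter]
  rw [this]
  apply isClosed_iInter; intro x
  apply isClosed_iInter; intro y
  apply isClosed_le ?_ continuous_const
  exact ((continuous_eval_const x).sub
    (continuous_eval_const y)).abs

instance (α : ℝ) : CompleteSpace ↥(HolderBall α fatSquare) :=
  (isClosed_holderBall α).completeSpace_coe

lemma zero_mem_holderBall (α : ℝ) :
    (0 : BoundedContinuousFunction ↥fatSquare ℝ) ∈ HolderBall α fatSquare := by
  intro x y
  simp only [BoundedContinuousFunction.coe_zero, Pi.zero_apply, sub_zero, abs_zero]
  exact Real.rpow_nonneg dist_nonneg α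

instance (α : ℝ) : Nonempty ↥(HolderBall α fatSquare) := ⟨⟨0, zero_mem_holderBall α⟩⟩

/-- finite-range elements of the Hölder ball -/
def FinRange (α : ℝ) : Set ↥(HolderBall α fatSquare) :=
  {h | (Set.range ⇑(↑h : BoundedContinuousFunction ↥fatSquare ℝ)).Finite}

lemma subtype_dist_eq {α : ℝ} (f g : ↥(HolderBall α fatSquare)) :
    dist f g = dist (↑f : BoundedContinuousFunction ↥fatSquare ℝ) ↑g := rfl

lemma holder_coe {α : ℝ} (h : ↥(HolderBall α fatSquare)) :
    ∀ x y : ↥fatSquare, |(↑h : BoundedContinuousFunction ↥fatSquare ℝ) x -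
      (↑h : BoundedContinuousFunction ↥fatSquare ℝ) y| ≤ dist x y ^ α := by
  intro x y
  exact h.2 x y

lemma dense_finRange {α : ℝ} (hα0 : 0 < α) (hα2 : α < 1/2) : Dense (FinRange α) := by
  rw [Metric.dense_iff]
  intro h r hr
  obtain ⟨g, hcont, hhold, hfin, hclose⟩ :=
    holder_approx α hα0 hα2 (half_pos hr) _ (holder_coe h)
  have hbdd : ∃ C, ∀ x y : ↥fatSquare, dist (g x) (g y) ≤ C := by
    refine ⟨2, fun x y => ?_⟩
    rw [Real.dist_eq]
    calc |g x - g y| ≤ dist x y ^ α := hhold x y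
      _ ≤ Real.sqrt 2 ^ α := Real.rpow_le_rpow dist_nonneg (fatSquare_bound x y) hα0.le
      _ ≤ 2 := sqrt_two_rpow_le_two hα0 (by linarith)
  set gB : BoundedContinuousFunction ↥fatSquare ℝ := ⟨⟨g, hcont⟩, hbdd⟩ with hgB
  have hmem : gB ∈ HolderBall α fatSquare := by
    intro x y
    exact hhold x y
  refine ⟨⟨gB, hmem⟩, Metric.mem_ball.2 ?_, ?_⟩
  · rw [subtype_dist_eq]
    have : dist gB ↑h ≤ r/2 := by
      rw [BoundedContinuousFunction.dist_le (by linarith)]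
      intro x
      rw [Real.dist_eq]
      exact hclose x
    linarith
  · exact hfin

/-- radius used in the Gδ construction -/
def radf (α : ℝ) (k : ℕ) (h : ↥(HolderBall α fatSquare)) : ℝ :=
  (((k:ℝ)+1) * 2 * (((Set.range ⇑(↑h : BoundedContinuousFunction ↥fatSquare ℝ)).ncard : ℝ) + 1))⁻¹

lemma radf_pos (α : ℝ) (k : ℕ) (h : ↥(HolderBall α fatSquare)) : 0 < radf α k h := by
  rw [radf]
  positivity

def GG (α : ℝ) : Set ↥(HolderBall α fatSquare) :=
  ⋂ k : ℕ, ⋃ h ∈ FinRange α, Metric.ball h (radf α k h)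

lemma GG_isGδ (α : ℝ) : IsGδ (GG α) := by
  apply IsGδ.iInter
  intro k
  apply IsOpen.isGδ
  exact isOpen_biUnion fun h _ => Metric.isOpen_ball

lemma GG_dense {α : ℝ} (hα0 : 0 < α) (hα2 : α < 1/2) : Dense (GG α) := by
  apply dense_iInter_of_isOpen
  · intro k
    exact isOpen_biUnion fun h _ => Metric.isOpen_ball
  · intro k
    apply Dense.mono ?_ (dense_finRange hα0 hα2)
    intro h hh
    exact Set.mem_biUnion hh (Metric.mem_ball_self (radf_pos α k h))

lemma GG_null_range {α : ℝ} {f : ↥(HolderBall α fatSquare)} (hf : f ∈ GG α) :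
    volume (Set.range ⇑(↑f : BoundedContinuousFunction ↥fatSquare ℝ)) = 0 := by
  set μ := volume (Set.range ⇑(↑f : BoundedContinuousFunction ↥fatSquare ℝ)) with hμ
  have key : ∀ k : ℕ, μ ≤ ENNReal.ofReal (((k:ℝ)+1))⁻¹ := by
    intro k
    have hk := Set.mem_iInter.1 hf k
    obtain ⟨h, hhFin, hball⟩ := Set.mem_iUnion₂.1 hk
    set r := radf α k h with hrdef
    have hdist : dist f h < r := Metric.mem_ball.1 hball
    set T := Set.range ⇑(↑h : BoundedContinuousFunction ↥fatSquare ℝ) with hT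
    have hTfin : T.Finite := hhFin
    set m := T.ncard with hm
    -- covering
    have hcover : Set.range ⇑(↑f : BoundedContinuousFunction ↥fatSquare ℝ) ⊆
        ⋃ t ∈ hTfin.toFinset, Metric.ball t r := by
      rintro v ⟨x, rfl⟩
      apply Set.mem_biUnion (Set.Finite.mem_toFinset hTfin |>.2 ⟨x, rfl⟩)
      rw [Metric.mem_ball, Real.dist_eq]
      calc |(↑f : BoundedContinuousFunction ↥fatSquare ℝ) x -
            (↑h : BoundedContinuousFunction ↥fatSquare ℝ) x|
          = dist ((↑f : BoundedContinuousFunction ↥fatSquare ℝ) x)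
            ((↑h : BoundedContinuousFunction ↥fatSquare ℝ) x) := (Real.dist_eq _ _).symm
        _ ≤ dist (↑f : BoundedContinuousFunction ↥fatSquare ℝ) ↑h :=
            BoundedContinuousFunction.dist_coe_le_dist x
        _ < r := hdist
    have hvol : μ ≤ (hTfin.toFinset.card : ℝ≥0∞) * ENNReal.ofReal (2*r) := by
      calc μ ≤ volume (⋃ t ∈ hTfin.toFinset, Metric.ball t r) := measure_mono hcover
        _ ≤ ∑ t ∈ hTfin.toFinset, volume (Metric.ball t r) := measure_biUnion_finset_le _ _
        _ = ∑ t ∈ hTfin.toFinset, ENNReal.ofReal (2*r) := by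
            apply Finset.sum_congr rfl; intro t _; exact Real.volume_ball t r
        _ = (hTfin.toFinset.card : ℝ≥0∞) * ENNReal.ofReal (2*r) := by
            rw [Finset.sum_const, nsmul_eq_mul]
    have hcard : hTfin.toFinset.card = m := by
      rw [hm, Set.ncard_eq_toFinset_card _ hTfin]
    have hfinal : (m : ℝ≥0∞) * ENNReal.ofReal (2*r) ≤ ENNReal.ofReal (((k:ℝ)+1))⁻¹ := by
      have hr0 : 0 ≤ 2*r := by have := radf_pos α k h; rw [hrdef]; linarith
      rw [← ENNReal.ofReal_natCast m, ← ENNReal.ofReal_mul (p := (m:ℝ)) (Nat.cast_nonneg m)]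
      apply ENNReal.ofReal_le_ofReal
      rw [hrdef, radf]
      have hm0 : (0:ℝ) ≤ (m:ℝ) := by positivity
      have hk0 : (0:ℝ) < (k:ℝ)+1 := by positivity
      have hm1 : (0:ℝ) < (m:ℝ)+1 := by positivity
      rw [← hT, ← hm]
      have expand : (m:ℝ) * (2 * (((k:ℝ)+1) * 2 * ((m:ℝ)+1))⁻¹)
          = ((m:ℝ)/((m:ℝ)+1)) * (((k:ℝ)+1))⁻¹ := by
        field_simp
      rw [expand]
      have hle1 : (m:ℝ)/((m:ℝ)+1) ≤ 1 := by
        rw [div_le_one hm1]; linarith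
      have : ((m:ℝ)/((m:ℝ)+1)) * (((k:ℝ)+1))⁻¹ ≤ 1 * (((k:ℝ)+1))⁻¹ :=
        mul_le_mul_of_nonneg_right hle1 (by positivity)
      linarith
    calc μ ≤ (hTfin.toFinset.card : ℝ≥0∞) * ENNReal.ofReal (2*r) := hvol
      _ = (m : ℝ≥0∞) * ENNReal.ofReal (2*r) := by rw [hcard]
      _ ≤ ENNReal.ofReal (((k:ℝ)+1))⁻¹ := hfinal
  by_contra h0
  obtain ⟨n, hn⟩ := ENNReal.exists_inv_nat_lt h0
  have h1 : μ ≤ ENNReal.ofReal (((n:ℝ)+1))⁻¹ := key n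
  have h2 : ENNReal.ofReal (((n:ℝ)+1))⁻¹ ≤ ((n:ℝ≥0∞))⁻¹ := by
    rw [ENNReal.ofReal_inv_of_pos (by positivity)]
    apply ENNReal.inv_le_inv'
    rw [show ((n:ℝ)+1 : ℝ) = ((n+1 : ℕ) : ℝ) by push_cast; ring]
    rw [ENNReal.ofReal_natCast]
    exact_mod_cast Nat.le_succ n
  exact absurd (le_trans h1 h2) (not_le.2 hn)

----------------------------------------------------------------
-- DstarF computations

lemma dimH_le_two (S : Set (EuclideanSpace ℝ (Fin 2))) : dimH S ≤ 2 := by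
  have h1 : dimH S ≤ dimH (Set.univ : Set (EuclideanSpace ℝ (Fin 2))) :=
    dimH_mono (Set.subset_univ S)
  rw [Real.dimH_univ_eq_finrank, finrank_euclideanSpace_fin] at h1
  simpa using h1

lemma DstarF_set_bounds (f : ↥fatSquare → ℝ) :
    Set.Iic (0:ℝ) ⊆ {d : ℝ | 0 < volume {r : ℝ | ENNReal.ofReal d ≤
      dimH (Subtype.val '' (f ⁻¹' {r}))}} ∧
    {d : ℝ | 0 < volume {r : ℝ | ENNReal.ofReal d ≤
      dimH (Subtype.val '' (f ⁻¹' {r}))}} ⊆ Set.Iic 2 := by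
  constructor
  · intro d hd
    have h0 : ENNReal.ofReal d = 0 := ENNReal.ofReal_eq_zero.2 hd
    have : {r : ℝ | ENNReal.ofReal d ≤ dimH (Subtype.val '' (f ⁻¹' {r}))} = Set.univ := by
      ext r; simp [h0]
    simp only [Set.mem_setOf_eq, this, Real.volume_univ]
    norm_num
  · intro d hd
    simp only [Set.mem_setOf_eq] at hd
    by_contra hd2
    simp only [Set.mem_Iic, not_le] at hd2
    have hempty : {r : ℝ | ENNReal.ofReal d ≤ dimH (Subtype.val '' (f ⁻¹' {r}))} = ∅ := by
      ext r
      simp only [Set.mem_setOf_eq, Set.mem_empty_iff_false, iff_false, not_le]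
      calc dimH (Subtype.val '' (f ⁻¹' {r})) ≤ 2 := dimH_le_two _
        _ < ENNReal.ofReal d := by
            rw [show ((2:ℝ≥0∞)) = ENNReal.ofReal 2 by norm_num]
            exact (ENNReal.ofReal_lt_ofReal_iff (by linarith)).2 hd2
    rw [hempty] at hd
    simp at hd

lemma DstarF_nonneg (f : ↥fatSquare → ℝ) : 0 ≤ DstarF fatSquare f := by
  rw [DstarF]
  have ⟨h1, h2⟩ := DstarF_set_bounds f
  apply le_csSup
  · exact ⟨2, fun d hd => h2 hd⟩
  · exact h1 (by norm_num : (0:ℝ) ∈ Set.Iic (0:ℝ))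

lemma DstarF_of_null (f : ↥fatSquare → ℝ) (hnull : volume (Set.range f) = 0) :
    DstarF fatSquare f = 0 := by
  have heq : {d : ℝ | 0 < volume {r : ℝ | ENNReal.ofReal d ≤
      dimH (Subtype.val '' (f ⁻¹' {r}))}} = Set.Iic 0 := by
    apply le_antisymm ?_ (DstarF_set_bounds f).1
    intro d hd
    simp only [Set.mem_setOf_eq] at hd
    by_contra hd0
    simp only [Set.mem_Iic, not_le] at hd0
    have hsub : {r : ℝ | ENNReal.ofReal d ≤ dimH (Subtype.val '' (f ⁻¹' {r}))} ⊆
        Set.range f := by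
      intro r hr
      simp only [Set.mem_setOf_eq] at hr
      by_contra hrange
      have : f ⁻¹' {r} = ∅ := by
        ext x; simp only [Set.mem_preimage, Set.mem_singleton_iff, Set.mem_empty_iff_false,
          iff_false]
        intro hx; exact hrange ⟨x, hx⟩
      rw [this, Set.image_empty, dimH_empty] at hr
      have : ENNReal.ofReal d = 0 := le_antisymm hr zero_le
      rw [ENNReal.ofReal_eq_zero] at this
      linarith
    have hmm := measure_mono (μ := volume) hsub
    rw [hnull] at hmm
    exact absurd (lt_of_lt_of_le hd hmm) (by simp)
  rw [DstarF, heq, csSup_Iic]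


lemma GG_inter_nonempty {α : ℝ} (hα0 : 0 < α) (hα2 : α < 1/2)
    {G : Set ↥(HolderBall α fatSquare)} (hd : Dense G) (hgδ : IsGδ G) :
    (G ∩ GG α).Nonempty :=
  (Dense.inter_of_Gδ hgδ (GG_isGδ α) hd (GG_dense hα0 hα2)).nonempty

theorem DStar_zero (α : ℝ) (hα0 : 0 < α) (hα2 : α < 1/2) : DStar α fatSquare = 0 := by
  rw [DStar]
  set Φ : ↥(HolderBall α fatSquare) → ℝ :=
    fun g => DstarF fatSquare ⇑(↑g : BoundedContinuousFunction ↥fatSquare ℝ) with hΦ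
  have hΦGG : ∀ f ∈ GG α, Φ f = 0 := fun f hf => DstarF_of_null _ (GG_null_range hf)
  have hΦ0 : ∀ f, 0 ≤ Φ f := fun f => DstarF_nonneg _
  have hset : {d : ℝ | ∃ G : Set ↥(HolderBall α fatSquare), Dense G ∧ IsGδ G ∧
      d = sInf (Φ '' G)} = {0} := by
    apply Set.eq_singleton_iff_unique_mem.2
    constructor
    · refine ⟨GG α, GG_dense hα0 hα2, GG_isGδ α, ?_⟩
      have himg : Φ '' GG α = {0} := by
        apply le_antisymm
        · rintro v ⟨f, hf, rfl⟩
          simp [hΦGG f hf]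
        · rintro v hv
          simp only [Set.mem_singleton_iff] at hv
          subst hv
          obtain ⟨f0, hf0⟩ := (GG_dense hα0 hα2).nonempty
          exact ⟨f0, hf0, hΦGG f0 hf0⟩
      rw [himg, csInf_singleton]
    · rintro d ⟨G, hdG, hgδ, rfl⟩
      apply le_antisymm
      · obtain ⟨f0, hf0G, hf0GG⟩ := GG_inter_nonempty hα0 hα2 hdG hgδ
        have h1 : sInf (Φ '' G) ≤ Φ f0 :=
          csInf_le ⟨0, by rintro v ⟨g, _, rfl⟩; exact hΦ0 g⟩ ⟨f0, hf0G, rfl⟩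
        rw [hΦGG f0 hf0GG] at h1
        exact h1
      · apply le_csInf (hdG.nonempty.image Φ)
        rintro v ⟨g, _, rfl⟩
        exact hΦ0 g
  rw [hset, csSup_singleton]

theorem stmt15 (α : ℝ) (hα0 : 0 < α) (hα1 : α < 1 / 2) :
    DStar α fatSquare = 0 ∧
    ∃ G : Set ↥(HolderBall α fatSquare), Dense G ∧ IsGδ G ∧
      ∀ f ∈ G, volume (Set.range
        ⇑((f : ↥(HolderBall α fatSquare)) : BoundedContinuousFunction ↥fatSquare ℝ)) = 0 :=
  ⟨DStar_zero α hα0 hα1,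
    ⟨GG α, GG_dense hα0 hα1, GG_isGδ α, fun _ hf => GG_null_range hf⟩⟩

end
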